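/- Let n ≥ 2. Let a denote the word obtained from the reflection of τ_1⋯τ_{2^{n−2}} by increasing its last digit by 1, and let b denote the word obtained from the reflection of τ_1⋯τ_{2^{n−1}} by increasing its last digit by 1. Then for every integer k ≥ 0, the infinite sequence τ_1⋯τ_{2^{n−2}} a^k b^∞ (the word τ_1⋯τ_{2^{n−2}}, followed by k copies of a, followed by the periodic repetition of b) belongs to U_{q_n}'. -/

import Mathlib

open Filter Topology

noncomputable section

/-- The value `Σ_{i≥0} d i / q^(i+1)` of a (0-indexed) digit sequence `d` in base `q`;
this corresponds to `((d_i)_{i≥1})_q` with `d_i = d (i-1)`. -/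
def seqVal (q : ℝ) (d : ℕ → ℕ) : ℝ := ∑' i : ℕ, (d i : ℝ) / q ^ (i + 1)

/-- `d` is a `q`-expansion of `x` with digits in `{0,1}`. -/
def IsExpansion (q x : ℝ) (d : ℕ → ℕ) : Prop :=
  (∀ i, d i ≤ 1) ∧ x = seqVal q d

/-- `x` has a unique `q`-expansion. -/
def HasUniqueExpansion (q x : ℝ) : Prop := ∃! d : ℕ → ℕ, IsExpansion q x d

/-- The set `U(x)` of univoque bases of `x`. -/
def UBases (x : ℝ) : Set ℝ := {q | 1 < q ∧ q < 2 ∧ HasUniqueExpansion q x}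

/-- `q_s(x) = inf U(x)`. -/
def qs (x : ℝ) : ℝ := sInf (UBases x)

/-- The univoque set `U_q` of `x ∈ [0, 1/(q-1)]` with a unique `q`-expansion. -/
def Uset (q : ℝ) : Set ℝ :=
  {x | x ∈ Set.Icc 0 (1 / (q - 1)) ∧ HasUniqueExpansion q x}

/-- The set `U_q'` of digit sequences which are the unique `q`-expansion of their value. -/
def USeq (q : ℝ) : Set (ℕ → ℕ) :=
  {d | (∀ i, d i ≤ 1) ∧ ∀ e : ℕ → ℕ, IsExpansion q (seqVal q d) e → e = d}

/-- The Thue–Morse sequence: `τ 0 = 0`, `τ (2n) = τ n`, `τ (2n+1) = 1 - τ n`. -/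
def IsThueMorse (τ : ℕ → ℕ) : Prop :=
  τ 0 = 0 ∧ (∀ n, τ (2 * n) = τ n) ∧ ∀ n, τ (2 * n + 1) = 1 - τ n

/-- `q` is the Komornik–Loreti constant: the base in `(1,2)` with `1 = Σ_{i≥1} τ_i q^{-i}`. -/
def IsKL (τ : ℕ → ℕ) (q : ℝ) : Prop :=
  1 < q ∧ q < 2 ∧ (1 : ℝ) = ∑' i : ℕ, (τ (i + 1) : ℝ) / q ^ (i + 1)

/-- `Q` is the sequence of bases `q_n`: `Q 0 = 1` and for `n ≥ 1`, `Q n` is the root in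
`(1,2)` of `1 = Σ_{i=1}^{2^n} τ_i q^{-i}`. -/
def IsBaseSeq (τ : ℕ → ℕ) (Q : ℕ → ℝ) : Prop :=
  Q 0 = 1 ∧ ∀ n, 1 ≤ n → 1 < Q n ∧ Q n < 2 ∧
    (1 : ℝ) = ∑ i ∈ Finset.range (2 ^ n), (τ (i + 1) : ℝ) / (Q n) ^ (i + 1)

/-- `D_n = ⋃_{q ∈ (q_{n-1}, q_n]} U_q`. -/
def D (Q : ℕ → ℝ) (n : ℕ) : Set ℝ := ⋃ q ∈ Set.Ioc (Q (n - 1)) (Q n), Uset q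

/-- The golden ratio. -/
def qG : ℝ := (1 + Real.sqrt 5) / 2

/-- Strict lexicographical order on digit sequences. -/
def seqLt (c d : ℕ → ℕ) : Prop := ∃ n, (∀ i, i < n → c i = d i) ∧ c n < d n

/-- The word `τ_1 ⋯ τ_m`. -/
def tmPrefix (τ : ℕ → ℕ) (m : ℕ) : List ℕ := (List.range m).map fun i => τ (i + 1)

/-- `w⁻`: decrease the last digit of a word by 1. -/
def lastDec (w : List ℕ) : List ℕ := w.dropLast ++ [w.getLastD 0 - 1]

/-- `w⁺`: increase the last digit of a word by 1. -/
def lastInc (w : List ℕ) : List ℕ := w.dropLast ++ [w.getLastD 0 + 1]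

/-- The reflection of a word. -/
def reflect (w : List ℕ) : List ℕ := w.map fun d => 1 - d

/-- The infinite sequence given by the prefix `p` followed by periodic repetition of `w`. -/
def prefPeriodic (p w : List ℕ) : ℕ → ℕ := fun j =>
  if j < p.length then p.getD j 0 else w.getD ((j - p.length) % w.length) 0

/-- `z_n = ((τ_1⋯τ_{2^{n-1}})(τ_{2^{n-1}+1}⋯τ_{2^n})^∞)_{q_n}`. -/
def zVal (τ : ℕ → ℕ) (Q : ℕ → ℝ) (n : ℕ) : ℝ :=
  seqVal (Q n) (prefPeriodic (tmPrefix τ (2 ^ (n - 1)))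
    ((List.range (2 ^ (n - 1))).map fun i => τ (2 ^ (n - 1) + (i + 1))))

/-- `z_{1,k} = Σ_{i=1}^k q_G^{-i} + 1/(q_G^k (q_G^2 - 1))`. -/
def z1 (k : ℕ) : ℝ :=
  (∑ i ∈ Finset.range k, 1 / qG ^ (i + 1)) + 1 / (qG ^ k * (qG ^ 2 - 1))

/-- The sequence `τ_1⋯τ_{2^{n-2}} a^k b^∞` where `a = (overline{τ_1⋯τ_{2^{n-2}}})⁺`
and `b = (overline{τ_1⋯τ_{2^{n-1}}})⁺`. -/
def stmt8Seq (τ : ℕ → ℕ) (n k : ℕ) : ℕ → ℕ :=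
  prefPeriodic
    (tmPrefix τ (2 ^ (n - 2)) ++
      (List.replicate k (lastInc (reflect (tmPrefix τ (2 ^ (n - 2)))))).flatten)
    (lastInc (reflect (tmPrefix τ (2 ^ (n - 1)))))

set_option linter.unusedSectionVars false
set_option maxHeartbeats 1000000


section TM
variable (τ : ℕ → ℕ) (h0 : τ 0 = 0) (he : ∀ i, τ (2*i) = τ i) (ho : ∀ i, τ (2*i+1) = 1 - τ i)

include h0 he ho

lemma tau_le_one : ∀ i, τ i ≤ 1 := by
  intro i
  induction i using Nat.strong_induction_on with
  | _ i ih =>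
    rcases Nat.even_or_odd i with ⟨t, ht⟩ | ⟨t, ht⟩
    · subst ht
      rcases Nat.eq_zero_or_pos t with rfl | hp
      · simp [h0]
      · rw [show t + t = 2*t by ring, he]; exact ih t (by omega)
    · subst ht; rw [ho]; omega

lemma tau_pow : ∀ l, τ (2^l) = 1 := by
  intro l
  induction l with
  | zero => have := ho 0; simpa [h0] using this
  | succ l ih => rw [pow_succ, mul_comm, he]; exact ih

lemma tau_add_pow : ∀ l, ∀ i < 2^l, τ (2^l + i) + τ i = 1 := by
  intro l
  induction l with
  | zero =>
    intro i hi
    interval_cases i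
    have := ho 0; simp [h0] at this ⊢; omega
  | succ l ih =>
    intro i hi
    rcases Nat.even_or_odd i with ⟨t, ht⟩ | ⟨t, ht⟩
    · subst ht
      have h1 : 2^(l+1) + (t + t) = 2 * (2^l + t) := by ring
      rw [h1, he]
      have h2 := ih t (by omega)
      have h3 : τ (t + t) = τ t := by rw [show t + t = 2*t by ring, he]
      omega
    · subst ht
      have h1 : 2^(l+1) + (2*t+1) = 2 * (2^l + t) + 1 := by ring
      rw [h1, ho, ho]
      have h2 := ih t (by omega)
      have h4 := tau_le_one τ h0 he ho t
      have h5 := tau_le_one τ h0 he ho (2^l + t)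
      omega

/-- Key combinatorial lemma about suffixes of Thue-Morse prefixes versus the prefix. -/
lemma tm_suffix : ∀ l : ℕ,
    (∀ r, 1 ≤ r → r < 2^l →
      (∃ j, j + 1 < 2^l - r ∧ (∀ i < j, τ (r+1+i) = τ (1+i)) ∧ τ (r+1+j) = 0 ∧ τ (1+j) = 1)
      ∨ (∃ s, 2^l - r = 2^s ∧ ∀ i < 2^s, τ (r+1+i) = τ (1+i)))
    ∧ (∀ r, r < 2^l →
      (∃ j, j + 1 < 2^l - r ∧ (∀ i < j, τ (r+1+i) + τ (1+i) = 1) ∧ τ (r+1+j) = 1 ∧ τ (1+j) = 1)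
      ∨ (∃ s, 2^l - r = 2^s ∧ ∀ i, i + 1 < 2^s → τ (r+1+i) + τ (1+i) = 1)) := by
  intro l
  induction l with
  | zero =>
    constructor
    · intro r h1 h2; omega
    · intro r hr
      right
      refine ⟨0, by omega, by intro i hi; omega⟩
  | succ l ih =>
    obtain ⟨ihW1, ihW2⟩ := ih
    have hM : 2^(l+1) = 2^l + 2^l := by rw [pow_succ]; ring
    have hτ1 : τ 1 = 1 := tau_pow τ h0 he ho 0
    constructor
    -- W1 at level l+1
    · intro r hr1 hr2
      rcases lt_trichotomy r (2^l) with hc | hc | hc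
      · -- r < 2^l
        rcases ihW1 r hr1 hc with ⟨j, hj, hagree, hm1, hm2⟩ | ⟨s, hs, hagree⟩
        · exact Or.inl ⟨j, by omega, hagree, hm1, hm2⟩
        · -- tie at level l, extend to mismatch at 2^(s+1)-1
          have hsM : 2^s < 2^l := by omega
          have hss : 2^(s+1) = 2^s + 2^s := by rw [pow_succ]; ring
          left
          refine ⟨2^(s+1) - 1, by omega, ?_, ?_, ?_⟩
          · intro i hi
            rcases lt_or_ge i (2^s) with hi2 | hi2
            · exact hagree i hi2
            · -- 2^s ≤ i < 2^(s+1) - 1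
              have hei : r + 1 + i = 2^l + (i - 2^s + 1) := by omega
              have he1 : i - 2^s + 1 < 2^l := by omega
              have hF1 := tau_add_pow τ h0 he ho l (i - 2^s + 1) he1
              have hei2 : 1 + i = 2^s + (i - 2^s + 1) := by omega
              have he2 : i - 2^s + 1 < 2^s := by omega
              have hF2 := tau_add_pow τ h0 he ho s (i - 2^s + 1) he2
              rw [hei, hei2]
              omega
          · have hei : r + 1 + (2^(s+1) - 1) = 2^l + 2^s := by omega
            rw [hei]
            have hF1 := tau_add_pow τ h0 he ho l (2^s) (by omega)
            have := tau_pow τ h0 he ho s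
            omega
          · have hei : 1 + (2^(s+1) - 1) = 2^(s+1) := by omega
            rw [hei]; exact tau_pow τ h0 he ho (s+1)
      · -- r = 2^l
        subst hc
        rcases Nat.eq_zero_or_pos l with rfl | hl
        · -- l = 0 : tie with s = 0
          right
          refine ⟨0, by norm_num, ?_⟩
          intro i hi
          interval_cases i
          have : (2:ℕ)^0 + 1 + 0 = 2*1 := by norm_num
          rw [this, he]
        · -- l ≥ 1 : mismatch at j = 0
          have hl2 : 2^1 ≤ 2^l := Nat.pow_le_pow_right (by norm_num) hl
          left
          refine ⟨0, by omega, by intro i hi; omega, ?_, by simpa using hτ1⟩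
          have hF := tau_add_pow τ h0 he ho l 1 (by omega)
          have heq : 2^l + 1 + 0 = 2^l + 1 := by omega
          rw [heq]; omega
      · -- 2^l < r < 2^(l+1) : use W2 at level l with r' = r - 2^l
        set r' := r - 2^l with hr'
        have hr'1 : r' < 2^l := by omega
        rcases ihW2 r' hr'1 with ⟨j, hj, hagree, hm1, hm2⟩ | ⟨s, hs, hagree⟩
        · left
          refine ⟨j, by omega, ?_, ?_, hm2⟩
          · intro i hi
            have hei : r + 1 + i = 2^l + (r' + 1 + i) := by omega
            have hF := tau_add_pow τ h0 he ho l (r' + 1 + i) (by omega)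
            have := hagree i hi
            rw [hei]; omega
          · have hei : r + 1 + j = 2^l + (r' + 1 + j) := by omega
            have hF := tau_add_pow τ h0 he ho l (r' + 1 + j) (by omega)
            rw [hei]; omega
        · right
          refine ⟨s, by omega, ?_⟩
          intro i hi
          rcases Nat.lt_or_ge (i+1) (2^s) with hi2 | hi2
          · have hei : r + 1 + i = 2^l + (r' + 1 + i) := by omega
            have hF := tau_add_pow τ h0 he ho l (r' + 1 + i) (by omega)
            have := hagree i hi2
            rw [hei]; omega
          · -- i = 2^s - 1
            have hei : r + 1 + i = 2^(l+1) := by omega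
            have hei2 : 1 + i = 2^s := by omega
            rw [hei, hei2, tau_pow τ h0 he ho (l+1), tau_pow τ h0 he ho s]
    -- W2 at level l+1
    · intro r hr2
      rcases lt_trichotomy r (2^l) with hc | hc | hc
      · rcases ihW2 r hc with ⟨j, hj, hagree, hm1, hm2⟩ | ⟨s, hs, hagree⟩
        · exact Or.inl ⟨j, by omega, hagree, hm1, hm2⟩
        · -- tie-shape at level l becomes mismatch at j = 2^s - 1
          left
          refine ⟨2^s - 1, by omega, ?_, ?_, ?_⟩
          · intro i hi; exact hagree i (by omega)
          · have hei : r + 1 + (2^s - 1) = 2^l := by omega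
            rw [hei]; exact tau_pow τ h0 he ho l
          · have hei : 1 + (2^s - 1) = 2^s := by omega
            rw [hei]; exact tau_pow τ h0 he ho s
      · -- r = 2^l : tie-shape with s = l
        subst hc
        right
        refine ⟨l, by omega, ?_⟩
        intro i hi
        have hei : 2^l + 1 + i = 2^l + (1 + i) := by omega
        have hF := tau_add_pow τ h0 he ho l (1+i) (by omega)
        rw [hei]; omega
      · -- r > 2^l : use W1 at level l
        set r' := r - 2^l with hr'
        have hr'0 : 1 ≤ r' := by omega
        have hr'1 : r' < 2^l := by omega
        rcases ihW1 r' hr'0 hr'1 with ⟨j, hj, hagree, hm1, hm2⟩ | ⟨s, hs, hagree⟩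
        · left
          refine ⟨j, by omega, ?_, ?_, hm2⟩
          · intro i hi
            have hei : r + 1 + i = 2^l + (r' + 1 + i) := by omega
            have hF := tau_add_pow τ h0 he ho l (r' + 1 + i) (by omega)
            have := hagree i hi
            rw [hei]; omega
          · have hei : r + 1 + j = 2^l + (r' + 1 + j) := by omega
            have hF := tau_add_pow τ h0 he ho l (r' + 1 + j) (by omega)
            rw [hei]; omega
        · right
          refine ⟨s, by omega, ?_⟩
          intro i hi
          have hei : r + 1 + i = 2^l + (r' + 1 + i) := by omega
          have hF := tau_add_pow τ h0 he ho l (r' + 1 + i) (by omega)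
          have := hagree i (by omega)
          rw [hei]; omega

end TM


def AF (τ : ℕ → ℕ) (N : ℕ) : ℕ → ℕ := fun p => if p % N = N - 1 then 0 else τ (p % N + 1)

def Below (c α : ℕ → ℕ) : Prop := ∃ j, (∀ p < j, c p = α p) ∧ c j = 0 ∧ α j = 1

lemma pow_mono_lt {s μ : ℕ} (h : 2^s < 2^μ) : 2^(s+1) ≤ 2^μ := by
  have hs : s + 1 ≤ μ := by
    by_contra hc
    have : (2:ℕ)^μ ≤ 2^s := Nat.pow_le_pow_right (by norm_num) (by omega)
    omega
  exact Nat.pow_le_pow_right (by norm_num) hs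

section TM
variable (τ : ℕ → ℕ)

variable (tau_pow' : ∀ l, τ (2^l) = 1)
variable (tau_add_pow' : ∀ l, ∀ i < 2^l, τ (2^l + i) + τ i = 1)
variable (tm_suffix' : ∀ l : ℕ,
    (∀ r, 1 ≤ r → r < 2^l →
      (∃ j, j + 1 < 2^l - r ∧ (∀ i < j, τ (r+1+i) = τ (1+i)) ∧ τ (r+1+j) = 0 ∧ τ (1+j) = 1)
      ∨ (∃ s, 2^l - r = 2^s ∧ ∀ i < 2^s, τ (r+1+i) = τ (1+i)))
    ∧ (∀ r, r < 2^l →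
      (∃ j, j + 1 < 2^l - r ∧ (∀ i < j, τ (r+1+i) + τ (1+i) = 1) ∧ τ (r+1+j) = 1 ∧ τ (1+j) = 1)
      ∨ (∃ s, 2^l - r = 2^s ∧ ∀ i, i + 1 < 2^s → τ (r+1+i) + τ (1+i) = 1)))

variable (μ : ℕ)

lemma A_small (p : ℕ) (hp : p < 2^(μ+2) - 1) : AF τ (2^(μ+2)) p = τ (p+1) := by
  unfold AF
  rw [Nat.mod_eq_of_lt (by omega)]
  have : p ≠ 2^(μ+2) - 1 := by omega
  simp [this]

include tau_pow' tau_add_pow'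

lemma tcLem (c : ℕ → ℕ) (s : ℕ) (hs : 2^(s+1) ≤ 2^μ)
    (hagree : ∀ p < 2^s, c p = AF τ (2^(μ+2)) p)
    (hc : ∀ t < 2^s, c (2^s + t) + τ (t+1) = 1) :
    Below c (AF τ (2^(μ+2))) := by
  have hss : 2^(s+1) = 2^s + 2^s := by rw [pow_succ]; ring
  have hμ4 : 2^(μ+2) = 4 * 2^μ := by rw [pow_add]; ring
  have hpos : 0 < 2^μ := Nat.two_pow_pos μ
  have hpos2 : 0 < 2^s := Nat.two_pow_pos s
  refine ⟨2^(s+1) - 1, ?_, ?_, ?_⟩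
  · intro p hp
    rcases lt_or_ge p (2^s) with h1 | h1
    · exact hagree p h1
    · have hA : AF τ (2^(μ+2)) p = τ (p+1) := A_small τ μ p (by omega)
      have he1 : p + 1 = 2^s + (p - 2^s + 1) := by omega
      have hF := tau_add_pow' s (p - 2^s + 1) (by omega)
      have hcc := hc (p - 2^s) (by omega)
      have he2 : 2^s + (p - 2^s) = p := by omega
      rw [he2] at hcc
      rw [hA, he1]
      omega
  · have hcc := hc (2^s - 1) (by omega)
    have he2 : 2^s + (2^s - 1) = 2^(s+1) - 1 := by omega
    have he3 : 2^s - 1 + 1 = 2^s := by omega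
    rw [he2, he3, tau_pow' s] at hcc
    omega
  · have hA : AF τ (2^(μ+2)) (2^(s+1) - 1) = τ (2^(s+1) - 1 + 1) := A_small τ μ _ (by omega)
    rw [hA, show 2^(s+1) - 1 + 1 = 2^(s+1) by omega]
    exact tau_pow' (s+1)

include tm_suffix'

lemma HLu (c : ℕ → ℕ) (r : ℕ) (h1 : 1 ≤ r) (h2 : r < 2^μ)
    (hwin : ∀ p < 2^μ - r, c p = τ (r+1+p))
    (hcont : ∀ t < 2^μ - r, c (2^μ - r + t) + τ (t+1) = 1) :
    Below c (AF τ (2^(μ+2))) := by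
  have hμ4 : 2^(μ+2) = 4 * 2^μ := by rw [pow_add]; ring
  have hpos : 0 < 2^μ := Nat.two_pow_pos μ
  rcases (tm_suffix' μ).1 r h1 h2 with ⟨j, hj, hagree, hm1, hm2⟩ | ⟨s, hs, hagree⟩
  · refine ⟨j, ?_, ?_, ?_⟩
    · intro p hp
      rw [hwin p (by omega), A_small τ μ p (by omega), Nat.add_comm p 1]
      exact hagree p hp
    · rw [hwin j (by omega)]; exact hm1
    · rw [A_small τ μ j (by omega), Nat.add_comm j 1]; exact hm2
  · refine tcLem τ tau_pow' tau_add_pow' μ c s (pow_mono_lt (by omega)) ?_ ?_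
    · intro p hp
      rw [hwin p (by omega), A_small τ μ p (by omega), Nat.add_comm p 1]
      exact hagree p hp
    · intro t ht
      have hcc := hcont t (by omega)
      rwa [show (2:ℕ)^μ - r = 2^s from hs] at hcc

lemma HLu' (c : ℕ → ℕ) (r : ℕ) (h1 : 1 ≤ r) (h2 : r < 2^μ)
    (hwin : ∀ p, p + 1 < 2^μ - r → c p = τ (r+1+p))
    (hlast : c (2^μ - r - 1) = 0) :
    Below c (AF τ (2^(μ+2))) := by
  have hμ4 : 2^(μ+2) = 4 * 2^μ := by rw [pow_add]; ring
  have hpos : 0 < 2^μ := Nat.two_pow_pos μ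
  rcases (tm_suffix' μ).1 r h1 h2 with ⟨j, hj, hagree, hm1, hm2⟩ | ⟨s, hs, hagree⟩
  · refine ⟨j, ?_, ?_, ?_⟩
    · intro p hp
      rw [hwin p (by omega), A_small τ μ p (by omega), Nat.add_comm p 1]
      exact hagree p hp
    · rw [hwin j (by omega)]; exact hm1
    · rw [A_small τ μ j (by omega), Nat.add_comm j 1]; exact hm2
  · refine ⟨2^μ - r - 1, ?_, hlast, ?_⟩
    · intro p hp
      rw [hwin p (by omega), A_small τ μ p (by omega), Nat.add_comm p 1]
      exact hagree p (by omega)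
    · rw [A_small τ μ _ (by omega), show 2^μ - r - 1 + 1 = 2^s by omega]
      exact tau_pow' s

lemma HLv (c : ℕ → ℕ) (r : ℕ) (h2 : r < 2^μ)
    (hwin : ∀ p < 2^μ - r, c p + τ (r+1+p) = 1) :
    Below c (AF τ (2^(μ+2))) := by
  have hμ4 : 2^(μ+2) = 4 * 2^μ := by rw [pow_add]; ring
  have hpos : 0 < 2^μ := Nat.two_pow_pos μ
  rcases (tm_suffix' μ).2 r h2 with ⟨j, hj, hagree, hm1, hm2⟩ | ⟨s, hs, hagree⟩
  · refine ⟨j, ?_, ?_, ?_⟩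
    · intro p hp
      have hw := hwin p (by omega)
      have ha := hagree p hp
      rw [A_small τ μ p (by omega), Nat.add_comm p 1]
      omega
    · have := hwin j (by omega); omega
    · rw [A_small τ μ j (by omega), Nat.add_comm j 1]; exact hm2
  · refine ⟨2^s - 1, ?_, ?_, ?_⟩
    · intro p hp
      have hw := hwin p (by omega)
      have ha := hagree p (by omega)
      rw [A_small τ μ p (by omega), Nat.add_comm p 1]
      omega
    · have h3 := hwin (2^s - 1) (by omega)
      rw [show r + 1 + (2^s - 1) = 2^μ by omega, tau_pow' μ] at h3
      omega
    · rw [A_small τ μ _ (by omega), show 2^s - 1 + 1 = 2^s by omega]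
      exact tau_pow' s

lemma HLv' (c : ℕ → ℕ) (r : ℕ) (h1 : 1 ≤ r) (h2 : r < 2^μ)
    (hwin : ∀ p, p + 1 < 2^μ - r → c p + τ (r+1+p) = 1)
    (hlastc : c (2^μ - r - 1) = 1)
    (hcont : ∀ t < 2^μ - r, c (2^μ - r + t) + τ (t+1) = 1) :
    Below c (AF τ (2^(μ+2))) := by
  have hμ4 : 2^(μ+2) = 4 * 2^μ := by rw [pow_add]; ring
  have hpos : 0 < 2^μ := Nat.two_pow_pos μ
  rcases (tm_suffix' μ).2 r h2 with ⟨j, hj, hagree, hm1, hm2⟩ | ⟨s, hs, hagree⟩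
  · refine ⟨j, ?_, ?_, ?_⟩
    · intro p hp
      have hw := hwin p (by omega)
      have ha := hagree p hp
      rw [A_small τ μ p (by omega), Nat.add_comm p 1]
      omega
    · have := hwin j (by omega); omega
    · rw [A_small τ μ j (by omega), Nat.add_comm j 1]; exact hm2
  · refine tcLem τ tau_pow' tau_add_pow' μ c s (pow_mono_lt (by omega)) ?_ ?_
    · intro p hp
      rcases Nat.lt_or_ge (p+1) (2^s) with h3 | h3
      · have hw := hwin p (by omega)
        have ha := hagree p h3
        rw [A_small τ μ p (by omega), Nat.add_comm p 1]
        omega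
      · have hp' : p = 2^s - 1 := by omega
        rw [hp', A_small τ μ _ (by omega), show 2^s - 1 + 1 = 2^s by omega, tau_pow' s]
        rw [show 2^s - 1 = 2^μ - r - 1 by omega]
        exact hlastc
    · intro t ht
      have hcc := hcont t (by omega)
      rwa [show (2:ℕ)^μ - r = 2^s from hs] at hcc

lemma HLm (c : ℕ → ℕ)
    (h1 : ∀ p, p + 1 < 2^μ → c p = τ (p+1))
    (h2 : c (2^μ - 1) = 0) :
    Below c (AF τ (2^(μ+2))) := by
  have hμ4 : 2^(μ+2) = 4 * 2^μ := by rw [pow_add]; ring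
  have hpos : 0 < 2^μ := Nat.two_pow_pos μ
  refine ⟨2^μ - 1, ?_, h2, ?_⟩
  · intro p hp
    rw [h1 p (by omega), A_small τ μ p (by omega)]
  · rw [A_small τ μ _ (by omega), show 2^μ - 1 + 1 = 2^μ by omega]
    exact tau_pow' μ

lemma HL2 (c : ℕ → ℕ)
    (h1 : ∀ p < 2^μ, c p = τ (p+1))
    (h2 : ∀ t < 2^μ, c (2^μ + t) + τ (t+1) = 1) :
    Below c (AF τ (2^(μ+2))) := by
  have hμμ : 2^(μ+1) = 2^μ + 2^μ := by rw [pow_succ]; ring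
  have hμ4 : 2^(μ+2) = 4 * 2^μ := by rw [pow_add]; ring
  have hpos : 0 < 2^μ := Nat.two_pow_pos μ
  refine ⟨2^(μ+1) - 1, ?_, ?_, ?_⟩
  · intro p hp
    rcases lt_or_ge p (2^μ) with h3 | h3
    · rw [h1 p h3, A_small τ μ p (by omega)]
    · have hcc := h2 (p - 2^μ) (by omega)
      rw [show 2^μ + (p - 2^μ) = p by omega] at hcc
      have hF := tau_add_pow' μ (p - 2^μ + 1) (by omega)
      rw [A_small τ μ p (by omega), show p + 1 = 2^μ + (p - 2^μ + 1) by omega]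
      omega
  · have hcc := h2 (2^μ - 1) (by omega)
    rw [show 2^μ + (2^μ - 1) = 2^(μ+1) - 1 by omega, show 2^μ - 1 + 1 = 2^μ by omega,
      tau_pow' μ] at hcc
    omega
  · rw [A_small τ μ _ (by omega), show 2^(μ+1) - 1 + 1 = 2^(μ+1) by omega]
    exact tau_pow' (μ+1)

end TM


def DF (τ : ℕ → ℕ) (m k : ℕ) : ℕ → ℕ := fun j =>
  if j < m then τ (j+1)
  else if j < (k+1)*m then (if (j - m) % m = m - 1 then 1 else 1 - τ ((j - m) % m + 1))
  else (if (j - (k+1)*m) % (2*m) = 2*m - 1 then 1 else 1 - τ ((j - (k+1)*m) % (2*m) + 1))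

lemma DF_le_one (τ : ℕ → ℕ) (hτ1 : ∀ i, τ i ≤ 1) (m k j : ℕ) : DF τ m k j ≤ 1 := by
  unfold DF
  split
  · exact hτ1 _
  · split
    · split
      · omega
      · omega
    · split
      · omega
      · omega


section Lists

variable (τ : ℕ → ℕ)

lemma tm_len (M : ℕ) : (tmPrefix τ M).length = M := by simp [tmPrefix]

lemma tm_getD (M j : ℕ) (hj : j < M) : (tmPrefix τ M).getD j 0 = τ (j+1) := by
  rw [tmPrefix, List.getD_eq_getElem _ _ (by simpa using hj)]
  simp

lemma aword_eq (M : ℕ) (hM : 1 ≤ M) :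
    lastInc (reflect (tmPrefix τ M)) =
      ((List.range (M-1)).map fun i => 1 - τ (i+1)) ++ [1 - τ (M-1+1) + 1] := by
  have h1 : reflect (tmPrefix τ M) = (List.range M).map fun i => 1 - τ (i+1) := by
    simp [reflect, tmPrefix, List.map_map]
  have h2 : (List.range M).map (fun i => 1 - τ (i+1)) =
      ((List.range (M-1)).map fun i => 1 - τ (i+1)) ++ [1 - τ (M-1+1)] := by
    conv_lhs => rw [show M = (M-1) + 1 by omega, List.range_succ]
    rw [List.map_append]
    simp only [List.map_cons, List.map_nil]
  rw [lastInc, h1, h2, List.dropLast_concat, List.getLastD_concat]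

lemma aword_len (M : ℕ) (hM : 1 ≤ M) : (lastInc (reflect (tmPrefix τ M))).length = M := by
  rw [aword_eq τ M hM]
  simp
  omega

lemma aword_getD (M r : ℕ) (hM : 1 ≤ M) (hr : r < M) :
    (lastInc (reflect (tmPrefix τ M))).getD r 0 =
      if r = M - 1 then 1 - τ M + 1 else 1 - τ (r+1) := by
  rw [aword_eq τ M hM]
  rcases Nat.lt_or_ge r (M-1) with h | h
  · rw [List.getD_append _ _ _ _ (by simpa using h), if_neg (by omega)]
    rw [List.getD_eq_getElem _ _ (by simpa using h)]
    simp
  · have hr' : r = M - 1 := by omega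
    subst hr'
    rw [List.getD_append_right _ _ _ _ (by simp)]
    simp
    rw [show M - 1 + 1 = M by omega]

lemma flat_getD (w : List ℕ) (k j : ℕ) (hj : j < k * w.length) :
    ((List.replicate k w).flatten).getD j 0 = w.getD (j % w.length) 0 := by
  induction k generalizing j with
  | zero => simp at hj
  | succ k ih =>
    have hkl : (k+1) * w.length = k * w.length + w.length := by ring
    rcases Nat.eq_zero_or_pos w.length with h0 | hlen
    · rw [h0] at hkl hj; omega
    rw [List.replicate_succ, List.flatten_cons]
    rcases Nat.lt_or_ge j w.length with h | h
    · rw [List.getD_append _ _ _ _ h, Nat.mod_eq_of_lt h]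
    · rw [List.getD_append_right _ _ _ _ h, ih (j - w.length) (by omega)]
      rw [Nat.mod_eq_sub_mod h]

lemma flat_len (w : List ℕ) (k : ℕ) : ((List.replicate k w).flatten).length = k * w.length := by
  induction k with
  | zero => simp
  | succ k ih => rw [List.replicate_succ, List.flatten_cons, List.length_append, ih]; ring

lemma stmt8_eq (n k : ℕ) (hn : 2 ≤ n) (hm : τ (2^(n-2)) = 1) (hm2 : τ (2^(n-1)) = 1) :
    stmt8Seq τ n k = DF τ (2^(n-2)) k := by
  have hm1 : 1 ≤ 2^(n-2) := Nat.two_pow_pos _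
  have hmm : 2^(n-1) = 2*2^(n-2) := by
    rw [← pow_succ']
    congr 1
    omega
  have hplen : 2^(n-2) + k * 2^(n-2) = (k+1)*2^(n-2) := by ring
  funext j
  unfold stmt8Seq prefPeriodic
  rw [List.length_append, tm_len, flat_len, aword_len τ _ hm1]
  rcases Nat.lt_or_ge j (2^(n-2)) with h1 | h1
  · -- initial u region
    rw [if_pos (by omega), List.getD_append _ _ _ _ (by rw [tm_len]; omega), tm_getD τ _ j h1]
    rw [show DF τ (2^(n-2)) k j = τ (j+1) from if_pos h1]
  rcases Nat.lt_or_ge j ((k+1)*(2^(n-2))) with h2 | h2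
  · -- a region
    rw [if_pos (by omega), List.getD_append_right _ _ _ _ (by rw [tm_len]; omega)]
    rw [tm_len, flat_getD _ _ _ (by rw [aword_len τ _ hm1]; omega), aword_len τ _ hm1]
    rw [aword_getD τ _ _ hm1 (Nat.mod_lt _ (by omega))]
    rw [DF]
    simp only [if_neg (show ¬ j < 2^(n-2) by omega), if_pos h2, hm]
  · -- b region
    rw [if_neg (by omega), aword_len τ _ (by omega), aword_getD τ _ _ (by omega)
        (Nat.mod_lt _ (by omega))]
    rw [DF]
    simp only [if_neg (show ¬ j < 2^(n-2) by omega),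
      if_neg (show ¬ j < (k+1)*2^(n-2) by omega), hmm, hm2]
    rw [show j - (2^(n-2) + k * 2^(n-2)) = j - (k+1)*2^(n-2) by omega, ← hmm, hm2]

end Lists
section Main
variable (τ : ℕ → ℕ)
variable (tau_le_one' : ∀ i, τ i ≤ 1)
variable (tau_pow' : ∀ l, τ (2^l) = 1)
variable (tau_add_pow' : ∀ l, ∀ i < 2^l, τ (2^l + i) + τ i = 1)
variable (tm_suffix' : ∀ l : ℕ,
    (∀ r, 1 ≤ r → r < 2^l →
      (∃ j, j + 1 < 2^l - r ∧ (∀ i < j, τ (r+1+i) = τ (1+i)) ∧ τ (r+1+j) = 0 ∧ τ (1+j) = 1)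
      ∨ (∃ s, 2^l - r = 2^s ∧ ∀ i < 2^s, τ (r+1+i) = τ (1+i)))
    ∧ (∀ r, r < 2^l →
      (∃ j, j + 1 < 2^l - r ∧ (∀ i < j, τ (r+1+i) + τ (1+i) = 1) ∧ τ (r+1+j) = 1 ∧ τ (1+j) = 1)
      ∨ (∃ s, 2^l - r = 2^s ∧ ∀ i, i + 1 < 2^s → τ (r+1+i) + τ (1+i) = 1)))

lemma DF_lt (m k j : ℕ) (h : j < m) : DF τ m k j = τ (j+1) := if_pos h

lemma DF_a' (m k x : ℕ) (hx : x < k * m) :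
    DF τ m k (m + x) = if x % m = m - 1 then 1 else 1 - τ (x % m + 1) := by
  have hkk : (k+1)*m = k*m + m := by ring
  unfold DF
  rw [if_neg (by omega), if_pos (by omega), Nat.add_sub_cancel_left]

lemma DF_b' (m k x : ℕ) :
    DF τ m k ((k+1)*m + x) =
      if x % (2*m) = 2*m - 1 then 1 else 1 - τ (x % (2*m) + 1) := by
  have hkk : (k+1)*m = k*m + m := by ring
  unfold DF
  rw [if_neg (by omega), if_neg (by omega), Nat.add_sub_cancel_left]

include tau_le_one' tau_pow' tau_add_pow' tm_suffix'

lemma lex_main (μ k : ℕ) : ∀ i : ℕ,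
    (DF τ (2^μ) k i = 0 → Below (fun p => DF τ (2^μ) k (i+1+p)) (AF τ (2^(μ+2)))) ∧
    (DF τ (2^μ) k i = 1 → Below (fun p => 1 - DF τ (2^μ) k (i+1+p)) (AF τ (2^(μ+2)))) := by
  intro i
  have hpos : 0 < 2^μ := Nat.two_pow_pos μ
  have hτm : τ (2^μ) = 1 := tau_pow' μ
  have hF2 : ∀ t < 2^μ, τ (2^μ + t) + τ t = 1 := tau_add_pow' μ
  have e1 : (k+1)*2^μ = k*2^μ + 2^μ := by ring
  have e4 : 2^μ*k = k*2^μ := by ring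
  rcases Nat.lt_or_ge i (2^μ) with him | him
  · -- Region 1 : initial u block
    have hDi : DF τ (2^μ) k i = τ (i+1) := DF_lt τ _ _ _ him
    constructor
    · intro h
      rw [hDi] at h
      have hi1 : i + 1 < 2^μ := by
        rcases Nat.lt_or_ge (i+1) (2^μ) with h' | h'
        · exact h'
        · exfalso; rw [show i + 1 = 2^μ by omega] at h; omega
      refine HLu τ tau_pow' tau_add_pow' tm_suffix' μ _ (i+1) (by omega) hi1 ?_ ?_
      · intro p hp
        show DF τ (2^μ) k (i+1+p) = τ (i+1+1+p)
        rw [DF_lt τ _ _ _ (by omega), show i+1+p+1 = i+1+1+p by omega]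
      · intro t ht
        show DF τ (2^μ) k (i+1+(2^μ-(i+1)+t)) + τ (t+1) = 1
        rw [show i+1+(2^μ-(i+1)+t) = 2^μ + t by omega]
        have hlt : τ (t+1) ≤ 1 := tau_le_one' _
        rcases Nat.eq_zero_or_pos k with hk | hk
        · subst hk
          rw [show 2^μ + t = (0+1)*2^μ + t by ring, DF_b' τ _ 0 t,
            Nat.mod_eq_of_lt (by omega), if_neg (by omega)]
          omega
        · have hkm : 2^μ ≤ k * 2^μ := by
            calc 2^μ = 1 * 2^μ := by ring
            _ ≤ k * 2^μ := Nat.mul_le_mul (by omega) le_rfl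
          rw [DF_a' τ _ k t (by omega), Nat.mod_eq_of_lt (by omega), if_neg (by omega)]
          omega
    · intro h
      by_cases hi : i = 2^μ - 1
      · -- i = 2^μ - 1 : boundary
        rcases Nat.eq_zero_or_pos k with hk | hk
        · subst hk
          refine HL2 τ tau_pow' tau_add_pow' tm_suffix' μ _ ?_ ?_
          · intro p hp
            show 1 - DF τ (2^μ) 0 (i+1+p) = τ (p+1)
            rw [show i+1+p = (0+1)*2^μ + p by omega, DF_b' τ _ 0 p,
              Nat.mod_eq_of_lt (by omega), if_neg (by omega)]
            have := tau_le_one' (p+1); omega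
          · intro t ht
            show 1 - DF τ (2^μ) 0 (i+1+(2^μ+t)) + τ (t+1) = 1
            rw [show i+1+(2^μ+t) = (0+1)*2^μ + (2^μ+t) by omega, DF_b' τ _ 0 _,
              Nat.mod_eq_of_lt (by omega)]
            by_cases ht' : t = 2^μ - 1
            · rw [if_pos (by omega)]
              rw [show t + 1 = 2^μ by omega, hτm]
            · rw [if_neg (by omega)]
              have h2 := hF2 (t+1) (by omega)
              rw [show 2^μ + t + 1 = 2^μ + (t+1) by omega] at *
              have := tau_le_one' (2^μ + (t+1))
              omega
        · refine HLm τ tau_pow' tau_add_pow' tm_suffix' μ _ ?_ ?_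
          · intro p hp
            show 1 - DF τ (2^μ) k (i+1+p) = τ (p+1)
            have hkm : 2^μ ≤ k * 2^μ := by
              calc 2^μ = 1 * 2^μ := by ring
              _ ≤ k * 2^μ := Nat.mul_le_mul (by omega) le_rfl
            rw [show i+1+p = 2^μ + p by omega, DF_a' τ _ k p (by omega),
              Nat.mod_eq_of_lt (by omega), if_neg (by omega)]
            have := tau_le_one' (p+1); omega
          · show 1 - DF τ (2^μ) k (i+1+(2^μ-1)) = 0
            have hkm : 2^μ ≤ k * 2^μ := by
              calc 2^μ = 1 * 2^μ := by ring
              _ ≤ k * 2^μ := Nat.mul_le_mul (by omega) le_rfl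
            rw [show i+1+(2^μ-1) = 2^μ + (2^μ-1) by omega, DF_a' τ _ k _ (by omega),
              Nat.mod_eq_of_lt (by omega), if_pos rfl]
      · -- i < 2^μ - 1, τ (i+1) = 1
        rw [hDi] at h
        refine HLv τ tau_pow' tau_add_pow' tm_suffix' μ _ (i+1) (by omega) ?_
        intro p hp
        show 1 - DF τ (2^μ) k (i+1+p) + τ (i+1+1+p) = 1
        rw [DF_lt τ _ _ _ (by omega), show i+1+p+1 = i+1+1+p by omega]
        have := tau_le_one' (i+1+1+p); omega
  rcases Nat.lt_or_ge i ((k+1)*2^μ) with hia | hia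
  · -- Region 2 : inside the a-copies
    obtain ⟨c₀, ρ, hρ, hieq, hc₀⟩ :
        ∃ c₀ ρ, ρ < 2^μ ∧ i = 2^μ + (2^μ*c₀ + ρ) ∧ c₀ < k := by
      refine ⟨(i - 2^μ)/2^μ, (i - 2^μ) % 2^μ, Nat.mod_lt _ hpos, ?_, ?_⟩
      · have := Nat.div_add_mod (i - 2^μ) (2^μ); omega
      · have hd := Nat.div_add_mod (i - 2^μ) (2^μ)
        by_contra hcon
        have : 2^μ*k ≤ 2^μ*((i - 2^μ)/2^μ) := Nat.mul_le_mul le_rfl (by omega)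
        omega
    have e2 : 2^μ*(c₀+1) = 2^μ*c₀ + 2^μ := by ring
    have e3 : 2^μ*(c₀+1) ≤ 2^μ*k := Nat.mul_le_mul le_rfl (by omega)
    have hmod : ∀ y < 2^μ, (2^μ*c₀ + y) % 2^μ = y := by
      intro y hy; rw [Nat.mul_add_mod, Nat.mod_eq_of_lt hy]
    have hDi : DF τ (2^μ) k i = if ρ = 2^μ - 1 then 1 else 1 - τ (ρ+1) := by
      rw [hieq, DF_a' τ _ k _ (by omega), hmod ρ hρ]
    by_cases hρ1 : ρ = 2^μ - 1
    · -- last digit of an a-copy : digit 1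
      rw [if_pos hρ1] at hDi
      constructor
      · intro h; rw [hDi] at h; exact absurd h (by norm_num)
      · intro _
        rcases Nat.lt_or_ge (c₀+1) k with hck | hck
        · -- next block is another a-copy
          have e5 : 2^μ*(c₀+2) = 2^μ*(c₀+1) + 2^μ := by ring
          have e6 : 2^μ*(c₀+2) ≤ 2^μ*k := Nat.mul_le_mul le_rfl (by omega)
          have hmod2 : ∀ y < 2^μ, (2^μ*(c₀+1) + y) % 2^μ = y := by
            intro y hy; rw [Nat.mul_add_mod, Nat.mod_eq_of_lt hy]
          refine HLm τ tau_pow' tau_add_pow' tm_suffix' μ _ ?_ ?_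
          · intro p hp
            show 1 - DF τ (2^μ) k (i+1+p) = τ (p+1)
            rw [show i+1+p = 2^μ + (2^μ*(c₀+1) + p) by omega, DF_a' τ _ k _ (by omega),
              hmod2 p (by omega), if_neg (by omega)]
            have := tau_le_one' (p+1); omega
          · show 1 - DF τ (2^μ) k (i+1+(2^μ-1)) = 0
            rw [show i+1+(2^μ-1) = 2^μ + (2^μ*(c₀+1) + (2^μ-1)) by omega,
              DF_a' τ _ k _ (by omega), hmod2 _ (by omega), if_pos rfl]
      -- next block is the b-region
        · have hck' : c₀ + 1 = k := by omega
          have e7 : i + 1 = (k+1)*2^μ := by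
            have : 2^μ*k = 2^μ*(c₀+1) := by rw [hck']
            omega
          refine HL2 τ tau_pow' tau_add_pow' tm_suffix' μ _ ?_ ?_
          · intro p hp
            show 1 - DF τ (2^μ) k (i+1+p) = τ (p+1)
            rw [show i+1+p = (k+1)*2^μ + p by omega, DF_b' τ _ k p,
              Nat.mod_eq_of_lt (by omega), if_neg (by omega)]
            have := tau_le_one' (p+1); omega
          · intro t ht
            show 1 - DF τ (2^μ) k (i+1+(2^μ+t)) + τ (t+1) = 1
            rw [show i+1+(2^μ+t) = (k+1)*2^μ + (2^μ+t) by omega, DF_b' τ _ k _,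
              Nat.mod_eq_of_lt (by omega)]
            by_cases ht' : t = 2^μ - 1
            · rw [if_pos (by omega), show t + 1 = 2^μ by omega, hτm]
            · rw [if_neg (by omega)]
              have h2 := hF2 (t+1) (by omega)
              rw [show 2^μ + t + 1 = 2^μ + (t+1) by omega]
              have := tau_le_one' (2^μ + (t+1))
              omega
    · -- interior digit of an a-copy
      rw [if_neg hρ1] at hDi
      have hnext : ∀ t, t < 2^μ - (ρ+1) →
          DF τ (2^μ) k (i+1+(2^μ-(ρ+1)+t)) + τ (t+1) = 1 := by
        intro t ht
        have harg : i+1+(2^μ-(ρ+1)+t) = 2^μ + (2^μ*(c₀+1) + t) := by omega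
        rcases Nat.lt_or_ge (c₀+1) k with hck | hck
        · have e5 : 2^μ*(c₀+2) = 2^μ*(c₀+1) + 2^μ := by ring
          have e6 : 2^μ*(c₀+2) ≤ 2^μ*k := Nat.mul_le_mul le_rfl (by omega)
          rw [harg, DF_a' τ _ k _ (by omega), Nat.mul_add_mod, Nat.mod_eq_of_lt (by omega),
            if_neg (by omega)]
          have := tau_le_one' (t+1); omega
        · have hck' : c₀ + 1 = k := by omega
          have e8 : 2^μ*k = 2^μ*(c₀+1) := by rw [hck']
          rw [harg, show 2^μ + (2^μ*(c₀+1) + t) = (k+1)*2^μ + t by omega, DF_b' τ _ k t,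
            Nat.mod_eq_of_lt (by omega), if_neg (by omega)]
          have := tau_le_one' (t+1); omega
      constructor
      · intro h
        rw [hDi] at h
        have hτρ : τ (ρ+1) = 1 := by have := tau_le_one' (ρ+1); omega
        refine HLv' τ tau_pow' tau_add_pow' tm_suffix' μ _ (ρ+1) (by omega) (by omega) ?_ ?_ ?_
        · intro p hp
          show DF τ (2^μ) k (i+1+p) + τ (ρ+1+1+p) = 1
          rw [show i+1+p = 2^μ + (2^μ*c₀ + (ρ+1+p)) by omega, DF_a' τ _ k _ (by omega),
            hmod _ (by omega), if_neg (by omega), show ρ+1+p+1 = ρ+1+1+p by omega]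
          have := tau_le_one' (ρ+1+1+p); omega
        · show DF τ (2^μ) k (i+1+(2^μ-(ρ+1)-1)) = 1
          rw [show i+1+(2^μ-(ρ+1)-1) = 2^μ + (2^μ*c₀ + (2^μ-1)) by omega,
            DF_a' τ _ k _ (by omega), hmod _ (by omega), if_pos rfl]
        · intro t ht
          exact hnext t ht
      · intro h
        rw [hDi] at h
        have hτρ : τ (ρ+1) = 0 := by have := tau_le_one' (ρ+1); omega
        refine HLu' τ tau_pow' tau_add_pow' tm_suffix' μ _ (ρ+1) (by omega) (by omega) ?_ ?_
        · intro p hp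
          show 1 - DF τ (2^μ) k (i+1+p) = τ (ρ+1+1+p)
          rw [show i+1+p = 2^μ + (2^μ*c₀ + (ρ+1+p)) by omega, DF_a' τ _ k _ (by omega),
            hmod _ (by omega), if_neg (by omega), show ρ+1+p+1 = ρ+1+1+p by omega]
          have := tau_le_one' (ρ+1+1+p); omega
        · show 1 - DF τ (2^μ) k (i+1+(2^μ-(ρ+1)-1)) = 0
          rw [show i+1+(2^μ-(ρ+1)-1) = 2^μ + (2^μ*c₀ + (2^μ-1)) by omega,
            DF_a' τ _ k _ (by omega), hmod _ (by omega), if_pos rfl]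
  · -- Region 3 : the periodic b-region
    obtain ⟨P, ρ, hρ, hieq⟩ :
        ∃ P ρ, ρ < 2*2^μ ∧ i = (k+1)*2^μ + (2*2^μ*P + ρ) := by
      refine ⟨(i - (k+1)*2^μ)/(2*2^μ), (i - (k+1)*2^μ) % (2*2^μ), Nat.mod_lt _ (by omega), ?_⟩
      have := Nat.div_add_mod (i - (k+1)*2^μ) (2*2^μ); omega
    have hmod : ∀ y < 2*2^μ, (2*2^μ*P + y) % (2*2^μ) = y := by
      intro y hy; rw [Nat.mul_add_mod, Nat.mod_eq_of_lt hy]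
    have f1 : 2*2^μ*(P+1) = 2*2^μ*P + 2*2^μ := by ring
    have hDi : DF τ (2^μ) k i = if ρ = 2*2^μ - 1 then 1 else 1 - τ (ρ+1) := by
      rw [hieq, DF_b' τ _ k _, hmod ρ hρ]
    have hnextper : ∀ y, y < 2*2^μ →
        DF τ (2^μ) k ((k+1)*2^μ + (2*2^μ*P + (2*2^μ + y))) =
          if y = 2*2^μ - 1 then 1 else 1 - τ (y+1) := by
      intro y hy
      rw [show 2*2^μ*P + (2*2^μ + y) = 2*2^μ*(P+1) + y by omega, DF_b' τ _ k _,
        Nat.mul_add_mod, Nat.mod_eq_of_lt hy]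
    rcases Nat.lt_or_ge ρ (2^μ) with hρm | hρm
    · -- inside the v-part of the period
      by_cases hρ1 : ρ = 2^μ - 1
      · -- digit is 1 - τ(2^μ) = 0
        have hDi0 : DF τ (2^μ) k i = 0 := by
          rw [hDi, if_neg (by omega), show ρ + 1 = 2^μ by omega, hτm]
        constructor
        · intro _
          refine HL2 τ tau_pow' tau_add_pow' tm_suffix' μ _ ?_ ?_
          · intro p hp
            show DF τ (2^μ) k (i+1+p) = τ (p+1)
            rw [show i+1+p = (k+1)*2^μ + (2*2^μ*P + (2^μ + p)) by omega, DF_b' τ _ k _,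
              hmod _ (by omega)]
            by_cases hp' : p = 2^μ - 1
            · rw [if_pos (by omega), show p + 1 = 2^μ by omega, hτm]
            · rw [if_neg (by omega)]
              have h2 := hF2 (p+1) (by omega)
              rw [show 2^μ + p + 1 = 2^μ + (p+1) by omega]
              have := tau_le_one' (2^μ + (p+1))
              have := tau_le_one' (p+1)
              omega
          · intro t ht
            show DF τ (2^μ) k (i+1+(2^μ+t)) + τ (t+1) = 1
            rw [show i+1+(2^μ+t) = (k+1)*2^μ + (2*2^μ*P + (2*2^μ + t)) by omega,
              hnextper t (by omega), if_neg (by omega)]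
            have := tau_le_one' (t+1); omega
        · intro h; rw [hDi0] at h; exact absurd h (by norm_num)
      · -- interior v digit
        have hDiv : DF τ (2^μ) k i = 1 - τ (ρ+1) := by rw [hDi, if_neg (by omega)]
        constructor
        · intro h
          rw [hDiv] at h
          have hτρ : τ (ρ+1) = 1 := by have := tau_le_one' (ρ+1); omega
          refine HLv τ tau_pow' tau_add_pow' tm_suffix' μ _ (ρ+1) (by omega) ?_
          intro p hp
          show DF τ (2^μ) k (i+1+p) + τ (ρ+1+1+p) = 1
          rw [show i+1+p = (k+1)*2^μ + (2*2^μ*P + (ρ+1+p)) by omega, DF_b' τ _ k _,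
            hmod _ (by omega), if_neg (by omega), show ρ+1+p+1 = ρ+1+1+p by omega]
          have := tau_le_one' (ρ+1+1+p); omega
        · intro h
          rw [hDiv] at h
          have hτρ : τ (ρ+1) = 0 := by have := tau_le_one' (ρ+1); omega
          refine HLu τ tau_pow' tau_add_pow' tm_suffix' μ _ (ρ+1) (by omega) (by omega) ?_ ?_
          · intro p hp
            show 1 - DF τ (2^μ) k (i+1+p) = τ (ρ+1+1+p)
            rw [show i+1+p = (k+1)*2^μ + (2*2^μ*P + (ρ+1+p)) by omega, DF_b' τ _ k _,
              hmod _ (by omega), if_neg (by omega), show ρ+1+p+1 = ρ+1+1+p by omega]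
            have := tau_le_one' (ρ+1+1+p); omega
          · intro t ht
            show 1 - DF τ (2^μ) k (i+1+(2^μ-(ρ+1)+t)) + τ (t+1) = 1
            rw [show i+1+(2^μ-(ρ+1)+t) = (k+1)*2^μ + (2*2^μ*P + (2^μ + t)) by omega,
              DF_b' τ _ k _, hmod _ (by omega), if_neg (by omega)]
            have h2 := hF2 (t+1) (by omega)
            rw [show 2^μ + t + 1 = 2^μ + (t+1) by omega]
            have := tau_le_one' (2^μ + (t+1))
            have := tau_le_one' (t+1)
            omega
    · -- inside the u-part of the period
      by_cases hρ1 : ρ = 2*2^μ - 1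
      · -- last digit of the period : digit 1
        have hDi1 : DF τ (2^μ) k i = 1 := by rw [hDi, if_pos hρ1]
        constructor
        · intro h; rw [hDi1] at h; exact absurd h (by norm_num)
        · intro _
          refine HL2 τ tau_pow' tau_add_pow' tm_suffix' μ _ ?_ ?_
          · intro p hp
            show 1 - DF τ (2^μ) k (i+1+p) = τ (p+1)
            rw [show i+1+p = (k+1)*2^μ + (2*2^μ*P + (2*2^μ + p)) by omega,
              hnextper p (by omega), if_neg (by omega)]
            have := tau_le_one' (p+1); omega
          · intro t ht
            show 1 - DF τ (2^μ) k (i+1+(2^μ+t)) + τ (t+1) = 1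
            rw [show i+1+(2^μ+t) = (k+1)*2^μ + (2*2^μ*P + (2*2^μ + (2^μ+t))) by omega,
              hnextper (2^μ+t) (by omega)]
            by_cases ht' : t = 2^μ - 1
            · rw [if_pos (by omega), show t + 1 = 2^μ by omega, hτm]
            · rw [if_neg (by omega)]
              have h2 := hF2 (t+1) (by omega)
              rw [show 2^μ + t + 1 = 2^μ + (t+1) by omega]
              have := tau_le_one' (2^μ + (t+1))
              have := tau_le_one' (t+1)
              omega
      · -- interior u digit of the period
        have ht0 : ρ + 1 = 2^μ + (ρ - 2^μ + 1) := by omega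
        have hsplit := hF2 (ρ - 2^μ + 1) (by omega)
        have hDiu : DF τ (2^μ) k i = 1 - τ (ρ+1) := by rw [hDi, if_neg (by omega)]
        have hτρb := tau_le_one' (ρ+1)
        have hτtb := tau_le_one' (ρ - 2^μ + 1)
        rw [ht0] at hτρb
        constructor
        · intro h
          rw [hDiu, ht0] at h
          have hτt : τ (ρ - 2^μ + 1) = 0 := by omega
          refine HLu τ tau_pow' tau_add_pow' tm_suffix' μ _ (ρ - 2^μ + 1) (by omega)
            (by omega) ?_ ?_
          · intro p hp
            show DF τ (2^μ) k (i+1+p) = τ (ρ - 2^μ + 1 + 1 + p)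
            rw [show i+1+p = (k+1)*2^μ + (2*2^μ*P + (ρ+1+p)) by omega, DF_b' τ _ k _,
              hmod _ (by omega)]
            by_cases hpe : ρ+1+p = 2*2^μ - 1
            · rw [if_pos hpe, show ρ - 2^μ + 1 + 1 + p = 2^μ by omega, hτm]
            · rw [if_neg hpe]
              have h2 := hF2 (ρ - 2^μ + 1 + 1 + p) (by omega)
              rw [show ρ+1+p+1 = 2^μ + (ρ - 2^μ + 1 + 1 + p) by omega]
              have := tau_le_one' (2^μ + (ρ - 2^μ + 1 + 1 + p))
              have := tau_le_one' (ρ - 2^μ + 1 + 1 + p)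
              omega
          · intro t ht
            show DF τ (2^μ) k (i+1+(2^μ-(ρ - 2^μ + 1)+t)) + τ (t+1) = 1
            rw [show i+1+(2^μ-(ρ - 2^μ + 1)+t) = (k+1)*2^μ + (2*2^μ*P + (2*2^μ + t)) by omega,
              hnextper t (by omega), if_neg (by omega)]
            have := tau_le_one' (t+1); omega
        · intro h
          rw [hDiu, ht0] at h
          have hτt : τ (ρ - 2^μ + 1) = 1 := by omega
          refine HLv τ tau_pow' tau_add_pow' tm_suffix' μ _ (ρ - 2^μ + 1) (by omega) ?_
          intro p hp
          show 1 - DF τ (2^μ) k (i+1+p) + τ (ρ - 2^μ + 1 + 1 + p) = 1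
          rw [show i+1+p = (k+1)*2^μ + (2*2^μ*P + (ρ+1+p)) by omega, DF_b' τ _ k _,
            hmod _ (by omega)]
          by_cases hpe : ρ+1+p = 2*2^μ - 1
          · rw [if_pos hpe, show ρ - 2^μ + 1 + 1 + p = 2^μ by omega, hτm]
          · rw [if_neg hpe]
            have h2 := hF2 (ρ - 2^μ + 1 + 1 + p) (by omega)
            rw [show ρ+1+p+1 = 2^μ + (ρ - 2^μ + 1 + 1 + p) by omega]
            have := tau_le_one' (2^μ + (ρ - 2^μ + 1 + 1 + p))
            have := tau_le_one' (ρ - 2^μ + 1 + 1 + p)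
            omega
end Main



section Anal
variable {q : ℝ} (hq1 : 1 < q)

include hq1

lemma summable_val (d : ℕ → ℕ) (hd : ∀ i, d i ≤ 1) :
    Summable (fun i => (d i : ℝ) / q ^ (i + 1)) := by
  have h0 : (0:ℝ) < q := by linarith
  have hgeo : Summable (fun i : ℕ => (1/q) ^ (i+1)) := by
    apply Summable.comp_injective (summable_geometric_of_lt_one (by positivity)
      (by rw [div_lt_one h0]; linarith)) (add_left_injective 1)
  refine Summable.of_nonneg_of_le (fun i => by positivity) (fun i => ?_) hgeo
  rw [one_div, inv_pow, ← one_div]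
  rw [div_le_div_iff₀ (by positivity) (by positivity)]
  have : (d i : ℝ) ≤ 1 := by exact_mod_cast hd i
  nlinarith [pow_pos h0 (i+1)]

lemma val_nonneg (d : ℕ → ℕ) : 0 ≤ seqVal q d := by
  have h0 : (0:ℝ) < q := by linarith
  exact tsum_nonneg (fun i => by positivity)

lemma tsum_ones : ∑' i : ℕ, (1:ℝ) / q ^ (i+1) = 1 / (q - 1) := by
  have h0 : (0:ℝ) < q := by linarith
  have h1 : (1/q : ℝ) < 1 := by rw [div_lt_one h0]; linarith
  have h2 : ∀ i : ℕ, (1:ℝ)/q^(i+1) = (1/q) * (1/q)^i := by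
    intro i
    rw [one_div, one_div, inv_pow, ← mul_inv, ← pow_succ']
  rw [tsum_congr h2, tsum_mul_left, tsum_geometric_of_lt_one (by positivity) h1]
  rw [one_div]
  rw [show (1:ℝ) - q⁻¹ = (q - 1)/q by field_simp]
  field_simp

lemma val_le_geom (d : ℕ → ℕ) (hd : ∀ i, d i ≤ 1) : seqVal q d ≤ 1 / (q - 1) := by
  have h0 : (0:ℝ) < q := by linarith
  rw [← tsum_ones hq1]
  refine Summable.tsum_le_tsum (fun i => ?_) (summable_val hq1 d hd) ?_
  · apply div_le_div_of_nonneg_right ?_ (by positivity)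
    · exact_mod_cast hd i
  · have := summable_val hq1 (fun _ => 1) (fun _ => le_rfl)
    simpa using this

lemma val_split (d : ℕ → ℕ) (hd : ∀ i, d i ≤ 1) (j : ℕ) :
    seqVal q d = (∑ p ∈ Finset.range j, (d p : ℝ) / q ^ (p+1))
      + (1 / q ^ j) * seqVal q (fun p => d (j + p)) := by
  have h0 : (0:ℝ) < q := by linarith
  unfold seqVal
  rw [← Summable.sum_add_tsum_nat_add j (summable_val hq1 d hd)]
  congr 1
  rw [← tsum_mul_left]
  apply tsum_congr
  intro i
  show (d (i+j):ℝ)/q^(i+j+1) = 1/q^j * ((d (j+i):ℝ)/q^(i+1))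
  have hq0' : q ≠ 0 := ne_of_gt h0
  rw [Nat.add_comm j i, show i + j + 1 = j + (i + 1) by omega, pow_add]
  field_simp

end Anal

lemma AF_val (τ : ℕ → ℕ) (N : ℕ) (hN : 1 ≤ N) (hτN : τ N = 1) {q : ℝ} (hq1 : 1 < q)
    (hτ1 : ∀ i, τ i ≤ 1)
    (heq : (1:ℝ) = ∑ i ∈ Finset.range N, (τ (i + 1) : ℝ) / q ^ (i + 1)) :
    seqVal q (AF τ N) = 1 := by
  have h0 : (0:ℝ) < q := by linarith
  have hA1 : ∀ i, AF τ N i ≤ 1 := by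
    intro i; unfold AF; split
    · omega
    · exact hτ1 _
  have hsplit := val_split hq1 (AF τ N) hA1 N
  have hshift : (fun p => AF τ N (N + p)) = AF τ N := by
    funext p; unfold AF; rw [Nat.add_mod_left]
  rw [hshift] at hsplit
  have hsum : ∑ p ∈ Finset.range N, (AF τ N p : ℝ)/q^(p+1) = 1 - 1/q^N := by
    have h2 : ∀ p ∈ Finset.range N, (AF τ N p : ℝ)/q^(p+1)
        = (τ (p+1):ℝ)/q^(p+1) - (if p = N-1 then (1:ℝ)/q^N else 0) := by
      intro p hp
      have hpN : p < N := Finset.mem_range.mp hp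
      unfold AF
      rw [Nat.mod_eq_of_lt hpN]
      by_cases hpe : p = N - 1
      · rw [if_pos hpe, if_pos hpe, show p + 1 = N by omega, hτN]
        push_cast
        ring
      · rw [if_neg hpe, if_neg hpe]
        ring
    rw [Finset.sum_congr rfl h2, Finset.sum_sub_distrib, Finset.sum_ite_eq' (Finset.range N)]
    rw [if_pos (Finset.mem_range.mpr (by omega))]
    rw [← heq]
  rw [hsum] at hsplit
  have hqN : (1:ℝ) < q^N := one_lt_pow₀ hq1 (by omega)
  have ht : (0:ℝ) < 1 - 1/q^N := by
    have : (1:ℝ)/q^N < 1 := by rw [div_lt_one (by positivity)]; linarith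
    linarith
  have h4 : seqVal q (AF τ N) * (1 - 1/q^N) = 1 * (1 - 1/q^N) := by
    linear_combination hsplit
  exact mul_right_cancel₀ (ne_of_gt ht) h4


lemma ana_unique {q : ℝ} (hq1 : 1 < q) (A d : ℕ → ℕ) (S : Set (ℕ → ℕ))
    (hA1 : ∀ i, A i ≤ 1) (hAval : seqVal q A ≤ 1) (hAinf : ∀ j, ∃ j', j ≤ j' ∧ A j' = 1)
    (hd : ∀ i, d i ≤ 1)
    (hS : ∀ c ∈ S, (∀ i, c i ≤ 1))
    (hSw : ∀ c ∈ S, ∃ j, (∀ p < j, c p = A p) ∧ c j = 0 ∧ A j = 1 ∧ (fun p => c (j+1+p)) ∈ S)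
    (hd0 : ∀ i, d i = 0 → (fun p => d (i+1+p)) ∈ S)
    (hd1 : ∀ i, d i = 1 → (fun p => 1 - d (i+1+p)) ∈ S) :
    ∀ e : ℕ → ℕ, IsExpansion q (seqVal q d) e → e = d := by
  have h0 : (0:ℝ) < q := by linarith
  have hAsum := summable_val hq1 A hA1
  -- key decomposition for members of S
  have hdecomp : ∀ c ∈ S, ∃ j, (∑ p ∈ Finset.range (j+1), (c p : ℝ)/q^(p+1))
      + (1:ℝ)/q^(j+1) ≤ seqVal q A ∧
      seqVal q c = (∑ p ∈ Finset.range (j+1), (c p : ℝ)/q^(p+1))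
        + (1/q^(j+1)) * seqVal q (fun p => c (j+1+p)) ∧ (fun p => c (j+1+p)) ∈ S ∧
      (∑ p ∈ Finset.range (j+1), (c p : ℝ)/q^(p+1)) = ∑ p ∈ Finset.range (j+1), (A p : ℝ)/q^(p+1) - 1/q^(j+1) := by
    intro c hc
    obtain ⟨j, hagree, hc0, hAj, hsh⟩ := hSw c hc
    refine ⟨j, ?_, ?_, hsh, ?_⟩
    · have heq : (∑ p ∈ Finset.range (j+1), (c p : ℝ)/q^(p+1)) + 1/q^(j+1)
          = ∑ p ∈ Finset.range (j+1), (A p : ℝ)/q^(p+1) := by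
        rw [Finset.sum_range_succ, Finset.sum_range_succ, hc0, hAj]
        push_cast
        rw [Finset.sum_congr rfl (fun p hp => by
          rw [hagree p (Finset.mem_range.mp hp)])]
        ring
      rw [heq]
      exact Summable.sum_le_tsum _ (fun p _ => by positivity) hAsum
    · exact val_split hq1 c (hS c hc) (j+1)
    · rw [Finset.sum_range_succ, Finset.sum_range_succ, hc0, hAj]
      push_cast
      rw [Finset.sum_congr rfl (fun p hp => by
        rw [hagree p (Finset.mem_range.mp hp)])]
      ring
  set V := sSup (seqVal q '' S) with hV
  have hbdd : BddAbove (seqVal q '' S) := by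
    refine ⟨1/(q-1), ?_⟩
    rintro x ⟨c, hc, rfl⟩
    exact val_le_geom hq1 c (hS c hc)
  have hVle : V ≤ 1 := by
    by_contra hVgt
    push_neg at hVgt
    have key : ∀ x ∈ seqVal q '' S, x ≤ 1 + (V - 1)/q := by
      rintro x ⟨c, hc, rfl⟩
      obtain ⟨j, hle1, hsplit, hsh, _⟩ := hdecomp c hc
      have h1 : seqVal q (fun p => c (j+1+p)) ≤ V := le_csSup hbdd ⟨_, hsh, rfl⟩
      have h2 : (∑ p ∈ Finset.range (j+1), (c p : ℝ)/q^(p+1)) ≤ 1 - 1/q^(j+1) := by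
        have := hle1
        linarith [hAval]
      have hqp : (0:ℝ) < q^(j+1) := by positivity
      have hqq : q ≤ q^(j+1) := le_self_pow₀ (by linarith) (by omega)
      have h3 : (1:ℝ)/q^(j+1) ≤ 1/q := by
        apply div_le_div_of_nonneg_left (by norm_num) h0 hqq
      calc seqVal q c = (∑ p ∈ Finset.range (j+1), (c p : ℝ)/q^(p+1))
            + (1/q^(j+1)) * seqVal q (fun p => c (j+1+p)) := hsplit
        _ ≤ (1 - 1/q^(j+1)) + (1/q^(j+1)) * V := by
            have := mul_le_mul_of_nonneg_left h1 (le_of_lt (by positivity : (0:ℝ) < 1/q^(j+1)))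
            linarith
        _ = 1 + (1/q^(j+1)) * (V - 1) := by ring
        _ ≤ 1 + (1/q) * (V - 1) := by nlinarith
        _ = 1 + (V - 1)/q := by ring
    have hVle2 : V ≤ 1 + (V - 1)/q := by
      refine Real.sSup_le key ?_
      have : (0:ℝ) < (V-1)/q := div_pos (by linarith) h0
      linarith
    have : (V - 1) * (1 - 1/q) ≤ 0 := by
      have h4 : (V-1)/q = (V-1) * (1/q) := by ring
      nlinarith
    have h5 : (0:ℝ) < 1 - 1/q := by
      rw [sub_pos, div_lt_one h0]; linarith
    nlinarith
  have hstrict : ∀ c ∈ S, seqVal q c < 1 := by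
    intro c hc
    obtain ⟨j, hle1, hsplit, hsh, heqA⟩ := hdecomp c hc
    obtain ⟨j', hj', hAj'⟩ := hAinf (j+1)
    have hval_sh : seqVal q (fun p => c (j+1+p)) ≤ 1 :=
      le_trans (le_csSup hbdd ⟨_, hsh, rfl⟩) hVle
    have hsumA : (∑ p ∈ Finset.range (j+1), (A p : ℝ)/q^(p+1)) + 1/q^(j'+1) ≤ seqVal q A := by
      have hsub : (∑ p ∈ Finset.range (j+1), (A p : ℝ)/q^(p+1))
          + ∑ p ∈ Finset.Ico (j+1) (j'+1), (A p : ℝ)/q^(p+1)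
          = ∑ p ∈ Finset.range (j'+1), (A p : ℝ)/q^(p+1) := by
        exact Finset.sum_range_add_sum_Ico _ (by omega)
      have hsingle : (1:ℝ)/q^(j'+1) ≤ ∑ p ∈ Finset.Ico (j+1) (j'+1), (A p : ℝ)/q^(p+1) := by
        have hmem : j' ∈ Finset.Ico (j+1) (j'+1) := by
          simp [Finset.mem_Ico]; omega
        have h := Finset.single_le_sum (f := fun p => (A p : ℝ)/q^(p+1))
          (fun p _ => by positivity) hmem
        simp only [hAj', Nat.cast_one] at h
        exact h
      have htsum : (∑ p ∈ Finset.range (j'+1), (A p : ℝ)/q^(p+1)) ≤ seqVal q A :=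
        Summable.sum_le_tsum _ (fun p _ => by positivity) hAsum
      linarith
    have hqp : (0:ℝ) < q^(j+1) := by positivity
    calc seqVal q c = (∑ p ∈ Finset.range (j+1), (c p : ℝ)/q^(p+1))
          + (1/q^(j+1)) * seqVal q (fun p => c (j+1+p)) := hsplit
      _ ≤ (∑ p ∈ Finset.range (j+1), (c p : ℝ)/q^(p+1)) + (1/q^(j+1)) * 1 := by
          have := mul_le_mul_of_nonneg_left hval_sh
            (le_of_lt (by positivity : (0:ℝ) < 1/q^(j+1)))
          linarith
      _ = ∑ p ∈ Finset.range (j+1), (A p : ℝ)/q^(p+1) := by rw [heqA]; ring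
      _ ≤ seqVal q A - 1/q^(j'+1) := by linarith
      _ < 1 := by
          have : (0:ℝ) < 1/q^(j'+1) := by positivity
          linarith
  -- uniqueness
  intro e he
  obtain ⟨he1, he2⟩ := he
  by_contra hne
  have hex : ∃ i, e i ≠ d i := Function.ne_iff.mp hne
  set j₀ := Nat.find hex with hj₀def
  have hj₀ : e j₀ ≠ d j₀ := Nat.find_spec hex
  have hmin : ∀ p < j₀, e p = d p := by
    intro p hp
    by_contra hcon
    exact absurd (Nat.find_le hcon : j₀ ≤ p) (by omega)
  have hsplit_e := val_split hq1 e he1 (j₀+1)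
  have hsplit_d := val_split hq1 d hd (j₀+1)
  have hsums : ∑ p ∈ Finset.range j₀, (e p : ℝ)/q^(p+1)
      = ∑ p ∈ Finset.range j₀, (d p : ℝ)/q^(p+1) :=
    Finset.sum_congr rfl (fun p hp => by rw [hmin p (Finset.mem_range.mp hp)])
  have hqp : (0:ℝ) < q^(j₀+1) := by positivity
  have key : (e j₀ : ℝ) + seqVal q (fun p => e (j₀+1+p))
      = (d j₀ : ℝ) + seqVal q (fun p => d (j₀+1+p)) := by
    have h1 : (e j₀:ℝ)/q^(j₀+1) + (1/q^(j₀+1)) * seqVal q (fun p => e (j₀+1+p))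
        = (d j₀:ℝ)/q^(j₀+1) + (1/q^(j₀+1)) * seqVal q (fun p => d (j₀+1+p)) := by
      have he2' : seqVal q e = seqVal q d := he2.symm
      rw [hsplit_e, hsplit_d, Finset.sum_range_succ, Finset.sum_range_succ, hsums] at he2'
      linarith [he2']
    have hQ : (q:ℝ)^(j₀+1) ≠ 0 := ne_of_gt hqp
    have h2 := congrArg (fun z : ℝ => z * q^(j₀+1)) h1
    simp only [add_mul, div_mul_cancel₀ _ hQ, one_div] at h2
    rw [mul_comm ((q^(j₀+1))⁻¹) (seqVal q (fun p => e (j₀+1+p))), mul_assoc,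
      inv_mul_cancel₀ hQ, mul_one, mul_comm ((q^(j₀+1))⁻¹) (seqVal q (fun p => d (j₀+1+p))),
      mul_assoc, inv_mul_cancel₀ hQ, mul_one] at h2
    exact h2
  have hd' : d j₀ = 0 ∨ d j₀ = 1 := by have := hd j₀; omega
  rcases hd' with hd0' | hd1'
  · have he0' : e j₀ = 1 := by have := he1 j₀; omega
    rw [hd0', he0'] at key
    have hmem := hd0 j₀ hd0'
    have hlt := hstrict _ hmem
    have hnn := val_nonneg hq1 (fun p => e (j₀+1+p))
    push_cast at key
    linarith
  · have he0' : e j₀ = 0 := by have := he1 j₀; omega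
    rw [hd1', he0'] at key
    have hmem := hd1 j₀ hd1'
    have hlt := hstrict _ hmem
    have hsum : seqVal q (fun p => d (j₀+1+p)) + seqVal q (fun p => 1 - d (j₀+1+p))
        = 1/(q-1) := by
      unfold seqVal
      rw [← Summable.tsum_add (summable_val hq1 _ (fun p => hd _))
        (summable_val hq1 _ (fun p => by have := hd (j₀+1+p); omega))]
      rw [← tsum_ones hq1]
      apply tsum_congr
      intro i
      have hdle := hd (j₀+1+i)
      have hcast : ((1 - d (j₀+1+i) : ℕ) : ℝ) = 1 - (d (j₀+1+i):ℝ) := by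
        rw [Nat.cast_sub hdle]; norm_num
      rw [← add_div, hcast]
      ring_nf
    have hle_e := val_le_geom hq1 (fun p => e (j₀+1+p)) (fun p => he1 _)
    have hnn_refl := val_nonneg hq1 (fun p => 1 - d (j₀+1+p))
    push_cast at key
    linarith

/-- For `n ≥ 2` and every `k ≥ 0`, the sequence `τ_1⋯τ_{2^{n-2}} a^k b^∞`
belongs to `U_{q_n}'`. -/
theorem stmt8_mem_USeq (τ : ℕ → ℕ) (hτ : IsThueMorse τ)
    (Q : ℕ → ℝ) (hQ : IsBaseSeq τ Q) (n : ℕ) (hn : 2 ≤ n) (k : ℕ) :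
    stmt8Seq τ n k ∈ USeq (Q n) := by
  obtain ⟨ht0, hte, hto⟩ := hτ
  obtain ⟨-, hQn⟩ := hQ
  obtain ⟨hq1, hq2, heq⟩ := hQn n (by omega)
  have hle := tau_le_one τ ht0 hte hto
  have hpow := tau_pow τ ht0 hte hto
  have hadd := tau_add_pow τ ht0 hte hto
  have hsuf := tm_suffix τ ht0 hte hto
  have hμ : n - 2 + 2 = n := by omega
  have hDeq : stmt8Seq τ n k = DF τ (2^(n-2)) k := stmt8_eq τ n k hn (hpow _) (hpow _)
  have hA1 : ∀ i, AF τ (2^n) i ≤ 1 := by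
    intro i; unfold AF; split
    · omega
    · exact hle _
  have hAval : seqVal (Q n) (AF τ (2^n)) = 1 :=
    AF_val τ (2^n) (Nat.two_pow_pos n) (hpow n) hq1 hle heq
  have h4n : 4 ≤ 2^n := by
    calc (4:ℕ) = 2^2 := by norm_num
    _ ≤ 2^n := Nat.pow_le_pow_right (by norm_num) hn
  have hAinf : ∀ j, ∃ j', j ≤ j' ∧ AF τ (2^n) j' = 1 := by
    intro j
    refine ⟨2^n * j, Nat.le_mul_of_pos_left j (Nat.two_pow_pos n), ?_⟩
    unfold AF
    rw [Nat.mul_mod_right, if_neg (by omega)]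
    simpa using hpow 0
  have hDle : ∀ i, DF τ (2^(n-2)) k i ≤ 1 := fun i => DF_le_one τ hle _ _ _
  have hlex := lex_main τ hle hpow hadd hsuf (n-2) k
  rw [hμ] at hlex
  refine ⟨?_, ?_⟩
  · intro i
    rw [hDeq]
    exact hDle i
  · intro e he'
    rw [hDeq] at he' ⊢
    set S : Set (ℕ → ℕ) := {c | ∃ i,
      (DF τ (2^(n-2)) k i = 0 ∧ ∀ p, c p = DF τ (2^(n-2)) k (i+1+p)) ∨
      (DF τ (2^(n-2)) k i = 1 ∧ ∀ p, c p = 1 - DF τ (2^(n-2)) k (i+1+p))} with hSdef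
    refine ana_unique hq1 (AF τ (2^n)) (DF τ (2^(n-2)) k) S hA1 (le_of_eq hAval) hAinf
      hDle ?_ ?_ ?_ ?_ e he'
    · -- digits of S members
      rintro c ⟨i, ⟨hdi, hcp⟩ | ⟨hdi, hcp⟩⟩ <;> intro p <;> rw [hcp p]
      · exact hDle _
      · omega
    · -- the shift-closure witness property
      rintro c ⟨i, ⟨hdi, hcp⟩ | ⟨hdi, hcp⟩⟩
      · obtain ⟨j, hagree, hj0, hj1⟩ := (hlex i).1 hdi
        have hj0' : DF τ (2^(n-2)) k (i+1+j) = 0 := hj0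
        refine ⟨j, ?_, ?_, hj1, ?_⟩
        · intro p hp
          rw [hcp p]
          exact hagree p hp
        · rw [hcp j]; exact hj0'
        · refine ⟨i+1+j, Or.inl ⟨hj0', ?_⟩⟩
          intro p
          show c (j+1+p) = DF τ (2^(n-2)) k (i+1+j+1+p)
          rw [hcp (j+1+p), show i+1+(j+1+p) = i+1+j+1+p by omega]
      · obtain ⟨j, hagree, hj0, hj1⟩ := (hlex i).2 hdi
        have hj0' : 1 - DF τ (2^(n-2)) k (i+1+j) = 0 := hj0
        have hj0'' : DF τ (2^(n-2)) k (i+1+j) = 1 := by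
          have := hDle (i+1+j); omega
        refine ⟨j, ?_, ?_, hj1, ?_⟩
        · intro p hp
          rw [hcp p]
          exact hagree p hp
        · rw [hcp j]; exact hj0'
        · refine ⟨i+1+j, Or.inr ⟨hj0'', ?_⟩⟩
          intro p
          show c (j+1+p) = 1 - DF τ (2^(n-2)) k (i+1+j+1+p)
          rw [hcp (j+1+p), show i+1+(j+1+p) = i+1+j+1+p by omega]
    · intro i hdi
      exact ⟨i, Or.inl ⟨hdi, fun p => rfl⟩⟩
    · intro i hdi
      exact ⟨i, Or.inr ⟨hdi, fun p => rfl⟩⟩
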